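/- Let Q > 0, ω > 0, x > 0, y > 0 and ℓ ∈ ℕ, and let a₀, a₁, a₂ be the associated cubic coefficients of the extremal Reissner–Nordström effective potential. Then there is exactly one r > 0 with r³ + a₂r² + a₁r + a₀ = 0; consequently the derivative of the effective potential vanishes at exactly one point of (0,∞). -/

import Mathlib

open Real

/-- The effective radial potential of a charged massive scalar in the extremal
Reissner–Nordström background. -/
noncomputable def Vrn (Q ω x y : ℝ) (ℓ : ℕ) (r : ℝ) : ℝ :=
  (1 + x)^2 * ω^2 + 4*Q*ω^2*(x^2 + 2*x + y)/r
    + ((ℓ : ℝ)*((ℓ : ℝ) + 1) + 4*Q^2*ω^2*(x^2 + 2*x - (y - 4)*y))/r^2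
    - 16*Q^3*(y - 1)*y*ω^2/r^3 - 16*Q^4*y^2*ω^2/r^4

/-- The cubic coefficient `a₂`. -/
noncomputable def a₂rn (Q ω x y : ℝ) (ℓ : ℕ) : ℝ :=
  ((ℓ : ℝ)*((ℓ : ℝ) + 1) + 4*Q^2*ω^2*(x^2 + 2*x - (y - 4)*y)) / (2*Q*ω^2*(x^2 + 2*x + y))

/-- The cubic coefficient `a₁`. -/
noncomputable def a₁rn (Q x y : ℝ) : ℝ := -12*Q^2*(y - 1)*y / (x^2 + 2*x + y)

/-- The cubic coefficient `a₀`. -/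
noncomputable def a₀rn (Q x y : ℝ) : ℝ := -16*Q^3*y^2 / (x^2 + 2*x + y)

set_option maxHeartbeats 1000000 in
/-- The associated cubic has exactly one positive root; consequently the derivative of
the extremal RN effective potential vanishes at exactly one point of `(0,∞)`. -/
theorem stmt_6 (Q ω x y : ℝ) (ℓ : ℕ) (hQ : 0 < Q) (hω : 0 < ω)
    (hx : 0 < x) (hy : 0 < y) :
    (∃! r : ℝ, 0 < r ∧
        r^3 + a₂rn Q ω x y ℓ * r^2 + a₁rn Q x y * r + a₀rn Q x y = 0) ∧
      (∃! r : ℝ, 0 < r ∧ deriv (Vrn Q ω x y ℓ) r = 0) := by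
  have hA : 0 < x^2 + 2*x + y := by positivity
  set b2 := a₂rn Q ω x y ℓ with hb2def
  set b1 := a₁rn Q x y with hb1def
  set b0 := a₀rn Q x y with hb0def
  set f : ℝ → ℝ := fun r => r^3 + b2*r^2 + b1*r + b0 with hfdef
  have hb0 : b0 < 0 := by
    rw [hb0def, a₀rn]
    apply div_neg_of_neg_of_pos _ hA
    have : 0 < 16*Q^3*y^2 := by positivity
    linarith
  have hkey : b1 ≤ 0 ∨ 0 < b2 := by
    by_cases hy1 : 1 ≤ y
    · left
      rw [hb1def, a₁rn]
      apply div_nonpos_of_nonpos_of_nonneg _ hA.le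
      nlinarith [sq_nonneg Q, mul_nonneg (mul_nonneg (sq_nonneg Q) (sub_nonneg.2 hy1)) hy.le]
    · right
      push_neg at hy1
      rw [hb2def, a₂rn]
      apply div_pos _ (by positivity)
      have h1 : (0:ℝ) ≤ (ℓ:ℝ)*((ℓ:ℝ)+1) := by positivity
      have h2 : 0 < Q^2*ω^2 := by positivity
      have h3 : 0 < y*(4-y) := mul_pos hy (by linarith)
      have h4 : 0 < x^2 + 2*x := by positivity
      nlinarith [mul_pos h2 h3, mul_pos h2 h4]
  -- uniqueness of positive root of f
  have huniq : ∀ s t : ℝ, 0 < s → s < t → f s = 0 → f t = 0 → False := by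
    intro s t hs hst hfs hft
    have ht : 0 < t := hs.trans hst
    rcases hkey with hb1 | hb2
    · have hid : (t - s) * (s^2*t^2 - b1*(s*t) - b0*(s+t)) = 0 := by
        have := hfs; have := hft
        simp only [hfdef] at hfs hft
        linear_combination s^2 * hft - t^2 * hfs
      have hbr : 0 < s^2*t^2 - b1*(s*t) - b0*(s+t) := by
        nlinarith [mul_pos (mul_pos hs ht) (mul_pos hs ht), mul_nonneg (neg_nonneg.2 hb1) (mul_pos hs ht).le, mul_pos (neg_pos.2 hb0) (add_pos hs ht)]
      nlinarith [mul_pos (sub_pos.2 hst) hbr]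
    · have hid : (t - s) * (s*t*(s+t) + b2*(s*t) - b0) = 0 := by
        simp only [hfdef] at hfs hft
        linear_combination s * hft - t * hfs
      have hbr : 0 < s*t*(s+t) + b2*(s*t) - b0 := by
        nlinarith [mul_pos (mul_pos hs ht) (add_pos hs ht), mul_pos hb2 (mul_pos hs ht)]
      nlinarith [mul_pos (sub_pos.2 hst) hbr]
  -- existence
  have hcont : Continuous f := by
    simp only [hfdef]; continuity
  set R : ℝ := 1 + |b2| + |b1| + |b0| with hRdef
  have hR1 : 1 ≤ R := by
    have := abs_nonneg b2; have := abs_nonneg b1; have := abs_nonneg b0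
    simp only [hRdef]; linarith
  have hRpos : 0 < R := lt_of_lt_of_le one_pos hR1
  have hfR : 0 < f R := by
    simp only [hfdef]
    have hR2 : (1:ℝ) ≤ R^2 := by nlinarith
    have h2' : (-(|b2|)) * R^2 ≤ b2 * R^2 := mul_le_mul_of_nonneg_right (neg_abs_le b2) (sq_nonneg R)
    have h1' : (-(|b1|)) * R ≤ b1 * R := mul_le_mul_of_nonneg_right (neg_abs_le b1) hRpos.le
    have h0' : -(|b0|) ≤ b0 := neg_abs_le b0
    have expand : R^3 - |b2| * R^2 = R^2 + |b1| * R^2 + |b0| * R^2 := by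
      rw [hRdef]; ring
    have g2 : |b1| * R ≤ |b1| * R^2 :=
      mul_le_mul_of_nonneg_left (by nlinarith) (abs_nonneg b1)
    have g3 : |b0| * 1 ≤ |b0| * R^2 := mul_le_mul_of_nonneg_left hR2 (abs_nonneg b0)
    nlinarith [mul_pos hRpos hRpos]
  have hIVT : (0:ℝ) ∈ f '' Set.Icc 0 R := by
    apply intermediate_value_Icc (by linarith) hcont.continuousOn
    constructor
    · simp only [hfdef]; simp; linarith
    · exact hfR.le
  obtain ⟨r, hrmem, hfr⟩ := hIVT
  have hr0 : 0 < r := by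
    rcases hrmem.1.lt_or_eq with h | h
    · exact h
    · exfalso; rw [← h] at hfr; simp only [hfdef] at hfr; simp at hfr; linarith
  have hEU1 : ∃! r : ℝ, 0 < r ∧ f r = 0 := by
    refine ⟨r, ⟨hr0, hfr⟩, ?_⟩
    rintro s ⟨hs0, hfs⟩
    rcases lt_trichotomy s r with h | h | h
    · exact absurd (huniq s r hs0 h hfs hfr) (fun x => x)
    · exact h
    · exact absurd (huniq r s hr0 h hfr hfs) (fun x => x)
  -- derivative of Vrn
  have hD : ∀ r : ℝ, 0 < r → HasDerivAt (Vrn Q ω x y ℓ)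
      ((-(4*Q*ω^2*(x^2+2*x+y))/r^5) * f r) r := by
    intro r hr
    have hrne : r ≠ 0 := hr.ne'
    have h1 : HasDerivAt (fun r : ℝ => 4*Q*ω^2*(x^2 + 2*x + y)/r)
        ((0*r - (4*Q*ω^2*(x^2 + 2*x + y))*1)/r^2) r :=
      (hasDerivAt_const r _).div (hasDerivAt_id r) hrne
    have h2 : HasDerivAt (fun r : ℝ => ((ℓ : ℝ)*((ℓ : ℝ) + 1) + 4*Q^2*ω^2*(x^2 + 2*x - (y - 4)*y))/r^2)
        ((0*r^2 - ((ℓ : ℝ)*((ℓ : ℝ) + 1) + 4*Q^2*ω^2*(x^2 + 2*x - (y - 4)*y))*((2:ℕ)*r^1))/(r^2)^2) r :=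
      (hasDerivAt_const r _).div (hasDerivAt_pow 2 r) (pow_ne_zero 2 hrne)
    have h3 : HasDerivAt (fun r : ℝ => 16*Q^3*(y - 1)*y*ω^2/r^3)
        ((0*r^3 - (16*Q^3*(y - 1)*y*ω^2)*((3:ℕ)*r^2))/(r^3)^2) r :=
      (hasDerivAt_const r _).div (hasDerivAt_pow 3 r) (pow_ne_zero 3 hrne)
    have h4 : HasDerivAt (fun r : ℝ => 16*Q^4*y^2*ω^2/r^4)
        ((0*r^4 - (16*Q^4*y^2*ω^2)*((4:ℕ)*r^3))/(r^4)^2) r :=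
      (hasDerivAt_const r _).div (hasDerivAt_pow 4 r) (pow_ne_zero 4 hrne)
    have hall := ((((hasDerivAt_const r ((1 + x)^2 * ω^2)).add h1).add h2).sub h3).sub h4
    have hVrn : Vrn Q ω x y ℓ = fun r : ℝ =>
        (1 + x)^2 * ω^2 + 4*Q*ω^2*(x^2 + 2*x + y)/r
          + ((ℓ : ℝ)*((ℓ : ℝ) + 1) + 4*Q^2*ω^2*(x^2 + 2*x - (y - 4)*y))/r^2
          - 16*Q^3*(y - 1)*y*ω^2/r^3 - 16*Q^4*y^2*ω^2/r^4 := rfl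
    rw [hVrn]
    refine hall.congr_deriv ?_
    simp only [hfdef, hb2def, hb1def, hb0def, a₂rn, a₁rn, a₀rn]
    field_simp
    ring
  have hfac : ∀ r : ℝ, 0 < r → (-(4*Q*ω^2*(x^2+2*x+y))/r^5) ≠ 0 := by
    intro r hr
    have h1 : 0 < (4*Q*ω^2*(x^2+2*x+y))/r^5 := by positivity
    intro h
    rw [neg_div] at h
    rw [neg_eq_zero] at h
    linarith
  obtain ⟨r₀, ⟨hr₀0, hfr₀⟩, hu₀⟩ := hEU1
  constructor
  · exact ⟨r₀, ⟨hr₀0, hfr₀⟩, hu₀⟩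
  · refine ⟨r₀, ⟨hr₀0, ?_⟩, ?_⟩
    · rw [(hD r₀ hr₀0).deriv, hfr₀, mul_zero]
    · rintro s ⟨hs0, hds⟩
      rw [(hD s hs0).deriv] at hds
      have : f s = 0 := by
        rcases mul_eq_zero.1 hds with h | h
        · exact absurd h (hfac s hs0)
        · exact h
      exact hu₀ s ⟨hs0, this⟩
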